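/- Let k be a field, R an n-dimensional Noetherian local domain with maximal ideal 𝔪 which is a k-algebra with k → R/𝔪 an isomorphism, and let v: R∖{0} → ℤⁿ be a good valuation on R. Let 𝔞• and 𝔟• be 𝔪-primary graded sequences of k-subspaces of R, and let 𝔞•𝔟• be the graded sequence with (𝔞•𝔟•)_k = 𝔞_k𝔟_k (the k-span of products). Then Γ(𝔞•) + Γ(𝔟•) ⊆ Γ(𝔞•𝔟•), where + denotes the Minkowski sum and Γ(𝔠•) denotes the closure of the convex hull of ⋃_{k>0} {v(f)/k : 0 ≠ f ∈ 𝔠_k}. -/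

import Mathlib

open MeasureTheory Pointwise Filter

/-- The canonical embedding of `ℤⁿ` into `ℝⁿ`. -/
noncomputable def zToR {n : ℕ} (x : Fin n → ℤ) : Fin n → ℝ := fun i => (x i : ℝ)

lemma pow_mem_graded {K R : Type*} [Field K] [CommRing R] [Algebra K R]
    (a : ℕ → Submodule K R)
    (hamul : ∀ k m : ℕ, 0 < k → 0 < m → ∀ f ∈ a k, ∀ g ∈ a m, f * g ∈ a (k + m))
    (k : ℕ) (hk : 0 < k) (f : R) (hf : f ∈ a k) :
    ∀ m : ℕ, 0 < m → f ^ m ∈ a (m * k) := by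
  intro m hm
  induction m with
  | zero => omega
  | succ m ih =>
    rcases Nat.eq_zero_or_pos m with hm0 | hm0
    · subst hm0; simpa using hf
    · have := hamul (m * k) k (by positivity) hk (f ^ m) (ih hm0) f hf
      have h : (m + 1) * k = m * k + k := by ring
      rw [h, pow_succ]
      exact this

lemma v_pow {n : ℕ} {R : Type*} [CommRing R] [IsDomain R] (v : R → Fin n → ℤ)
    (hv1 : ∀ f g : R, f ≠ 0 → g ≠ 0 → v (f * g) = v f + v g)
    (f : R) (hf : f ≠ 0) : ∀ m : ℕ, 0 < m → v (f ^ m) = m • v f := by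
  intro m hm
  induction m with
  | zero => omega
  | succ m ih =>
    rcases Nat.eq_zero_or_pos m with hm0 | hm0
    · subst hm0; simp
    · rw [pow_succ, hv1 _ _ (pow_ne_zero _ hf) hf, ih hm0, succ_nsmul]

theorem gamma_superadditive
    (n : ℕ) (K : Type) [Field K] (R : Type) [CommRing R] [IsDomain R]
    [IsNoetherianRing R] [IsLocalRing R] [Algebra K R]
    (hdim : ringKrullDim R = n)
    (hres : Function.Bijective
      ((Ideal.Quotient.mk (IsLocalRing.maximalIdeal R)).comp (algebraMap K R)))
    (ord : LinearOrder (Fin n → ℤ))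
    (hord : ∀ a b c : Fin n → ℤ, ord.le a b → ord.le (a + c) (b + c))
    (v : R → Fin n → ℤ)
    (hv1 : ∀ f g : R, f ≠ 0 → g ≠ 0 → v (f * g) = v f + v g)
    (hv2 : ∀ f g : R, f ≠ 0 → g ≠ 0 → f + g ≠ 0 →
      ord.le (ord.min (v f) (v g)) (v (f + g)))
    (hv3 : ∀ c : K, c ≠ 0 → v (algebraMap K R c) = 0)
    (hv4 : ∀ f g : R, f ≠ 0 → g ≠ 0 → v f = v g → ∃ c : K, c ≠ 0 ∧
      (g + algebraMap K R c * f = 0 ∨ ord.lt (v g) (v (g + algebraMap K R c * f))))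
    (S : Set (Fin n → ℤ)) (hS : S = v '' {f : R | f ≠ 0} ∪ {0})
    (C : Set (Fin n → ℝ)) (hC : C = closure (convexHull ℝ (zToR '' S)))
    (hCsalient : ∀ x ∈ C, -x ∈ C → x = 0)
    (ℓ : (Fin n → ℝ) →ₗ[ℝ] ℝ)
    (hℓnonneg : ∀ x ∈ C, 0 ≤ ℓ x) (hℓker : ∀ x ∈ C, ℓ x = 0 → x = 0)
    (r₀ : ℝ) (hr₀ : 0 < r₀)
    (hgood : ∀ f : R, f ≠ 0 → ∀ k : ℕ, 0 < k →
      (k : ℝ) * r₀ ≤ ℓ (zToR (v f)) → f ∈ IsLocalRing.maximalIdeal R ^ k)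
    (a b : ℕ → Submodule K R)
    (hamul : ∀ k m : ℕ, 0 < k → 0 < m → ∀ f ∈ a k, ∀ g ∈ a m, f * g ∈ a (k + m))
    (hbmul : ∀ k m : ℕ, 0 < k → 0 < m → ∀ f ∈ b k, ∀ g ∈ b m, f * g ∈ b (k + m))
    (ta : ℕ) (hta : 0 < ta)
    (haprim : ∀ f ∈ IsLocalRing.maximalIdeal R ^ ta, f ∈ a 1)
    (tb : ℕ) (htb : 0 < tb)
    (hbprim : ∀ f ∈ IsLocalRing.maximalIdeal R ^ tb, f ∈ b 1)
    (Γa Γb Γab : Set (Fin n → ℝ))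
    (hΓa : Γa = closure (convexHull ℝ (⋃ k : ℕ, ⋃ _ : 0 < k,
      (fun x => ((k : ℝ))⁻¹ • zToR x) '' (v '' {f : R | f ≠ 0 ∧ f ∈ a k}))))
    (hΓb : Γb = closure (convexHull ℝ (⋃ k : ℕ, ⋃ _ : 0 < k,
      (fun x => ((k : ℝ))⁻¹ • zToR x) '' (v '' {f : R | f ≠ 0 ∧ f ∈ b k}))))
    (hΓab : Γab = closure (convexHull ℝ (⋃ k : ℕ, ⋃ _ : 0 < k,
      (fun x => ((k : ℝ))⁻¹ • zToR x) '' (v '' {f : R | f ≠ 0 ∧ f ∈ a k * b k})))) :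
    Γa + Γb ⊆ Γab := by
  set A : Set (Fin n → ℝ) := ⋃ k : ℕ, ⋃ _ : 0 < k,
      (fun x => ((k : ℝ))⁻¹ • zToR x) '' (v '' {f : R | f ≠ 0 ∧ f ∈ a k}) with hA
  set B : Set (Fin n → ℝ) := ⋃ k : ℕ, ⋃ _ : 0 < k,
      (fun x => ((k : ℝ))⁻¹ • zToR x) '' (v '' {f : R | f ≠ 0 ∧ f ∈ b k}) with hB
  set D : Set (Fin n → ℝ) := ⋃ k : ℕ, ⋃ _ : 0 < k,
      (fun x => ((k : ℝ))⁻¹ • zToR x) '' (v '' {f : R | f ≠ 0 ∧ f ∈ a k * b k}) with hD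
  -- Step 1: A + B ⊆ D
  have hAB : A + B ⊆ D := by
    rintro z ⟨x, hx, y, hy, rfl⟩
    simp only [hA, hB, Set.mem_iUnion, Set.mem_image] at hx hy
    obtain ⟨k, hk, _, ⟨f, ⟨hf0, hfa⟩, rfl⟩, rfl⟩ := hx
    obtain ⟨m, hm, _, ⟨g, ⟨hg0, hgb⟩, rfl⟩, rfl⟩ := hy
    have hfm : f ^ m ∈ a (m * k) := pow_mem_graded a hamul k hk f hfa m hm
    have hgk : g ^ k ∈ b (k * m) := pow_mem_graded b hbmul m hm g hgb k hk
    have hprod : f ^ m * g ^ k ∈ a (k * m) * b (k * m) := by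
      rw [mul_comm m k] at hfm
      exact Submodule.mul_mem_mul hfm hgk
    have hne : f ^ m * g ^ k ≠ 0 := by
      exact mul_ne_zero (pow_ne_zero _ hf0) (pow_ne_zero _ hg0)
    have hvprod : v (f ^ m * g ^ k) = m • v f + k • v g := by
      rw [hv1 _ _ (pow_ne_zero _ hf0) (pow_ne_zero _ hg0),
        v_pow v hv1 f hf0 m hm, v_pow v hv1 g hg0 k hk]
    simp only [hD, Set.mem_iUnion, Set.mem_image]
    refine ⟨k * m, by positivity, _, ⟨f ^ m * g ^ k, ⟨hne, hprod⟩, rfl⟩, ?_⟩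
    rw [hvprod]
    have hkR : (k : ℝ) ≠ 0 := Nat.cast_ne_zero.2 hk.ne'
    have hmR : (m : ℝ) ≠ 0 := Nat.cast_ne_zero.2 hm.ne'
    funext i
    simp only [Pi.smul_apply, Pi.add_apply, zToR, smul_eq_mul]
    push_cast [nsmul_eq_mul]
    field_simp
  -- Step 2: hulls and closures
  have h2 : convexHull ℝ A + convexHull ℝ B ⊆ convexHull ℝ D := by
    rw [← convexHull_add]
    exact convexHull_mono hAB
  rw [hΓa, hΓb, hΓab]
  rintro z ⟨x, hx, y, hy, rfl⟩
  have : x + y ∈ closure (convexHull ℝ A + convexHull ℝ B) :=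
    map_mem_closure₂ continuous_add hx hy fun p hp q hq => Set.add_mem_add hp hq
  exact closure_mono h2 this
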